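/- Let a, b, c be integers with a ≥ 1, b ≥ 1 and c ≥ 1. Let G₁′(a,b,c) be the 9×9 rational matrix obtained from G₁(b,c) by replacing its upper-left 3×3 block −I with −(1/a)·I (i.e., replacing the (i,i) entries for i = 1,2,3 by −1/a, all other entries unchanged). Then a³ · det G₁′(a,b,c) = (3ab+3bc+3ca+3a+3b+3c+2)² in ℚ. -/

import Mathlib

open Matrix

/-- The 9×9 Goeritz matrix `G₁(b,c)` of the checkerboard-colored diagram of the
link `𝓛` arising from the pretzel knot `P(3, 2b+1, 2c+1)`. -/
def G1 (b c : ℤ) : Matrix (Fin 9) (Fin 9) ℤ :=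
  !![-1,  0,  0,  -1,   0,   0,    1,      0,      0;
      0, -1,  0,   0,  -1,   0,    0,      1,      0;
      0,  0, -1,   0,   0,  -1,    0,      0,      1;
     -1,  0,  0, b+1,   0,   0,    0,     -b,      0;
      0, -1,  0,   0, b+1,   0,    0,      0,     -b;
      0,  0, -1,   0,   0, b+1,   -b,      0,      0;
      1,  0,  0,   0,   0,  -b, b+2*c+1, -(c+1), -(c+1);
      0,  1,  0,  -b,   0,   0, -(c+1), b+2*c+1, -(c+1);
      0,  0,  1,   0,  -b,   0, -(c+1), -(c+1), b+2*c+1]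

/-- The matrix `G₁′(a,b,c)`: `G₁(b,c)` with the upper-left `3×3` block `-I`
replaced by `-(1/a)·I`, viewed over `ℚ`. -/
def G1' (a b c : ℤ) : Matrix (Fin 9) (Fin 9) ℚ :=
  Matrix.of fun i j =>
    if i = j ∧ i.1 < 3 then -(1/(a : ℚ)) else ((G1 b c i j : ℤ) : ℚ)

/-- Evaluation of an explicit vector at index `5`. -/
@[simp] lemma cons_val_five {α : Type*} {m : ℕ} (x : α) (u : Fin m.succ.succ.succ.succ.succ → α) :
    Matrix.vecCons x u 5 = vecHead (vecTail (vecTail (vecTail (vecTail u)))) := rfl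

/-- Explicit equivalence `Fin 3 ⊕ Fin 3 ≃ Fin 6`. -/
def e33 : Fin 3 ⊕ Fin 3 ≃ Fin 6 where
  toFun x := match x with
    | .inl i => ⟨i.1, by omega⟩
    | .inr i => ⟨i.1 + 3, by omega⟩
  invFun j := if h : (j : ℕ) < 3 then .inl ⟨j, h⟩ else .inr ⟨j - 3, by omega⟩
  left_inv := by decide
  right_inv := by decide

/-- Explicit equivalence `Fin 3 ⊕ Fin 6 ≃ Fin 9`. -/
def e36 : Fin 3 ⊕ Fin 6 ≃ Fin 9 where
  toFun x := match x with
    | .inl i => ⟨i.1, by omega⟩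
    | .inr i => ⟨i.1 + 3, by omega⟩
  invFun j := if h : (j : ℕ) < 3 then .inl ⟨j, h⟩ else .inr ⟨j - 3, by omega⟩
  left_inv := by decide
  right_inv := by decide

set_option maxHeartbeats 1600000 in
/-- The determinant of the 6×6 Schur complement. -/
lemma det6 (a b c : ℚ) (h : a + b + 1 ≠ 0) :
    (!![a+b+1, 0, 0, -a, -b, 0;
        0, a+b+1, 0, 0, -a, -b;
        0, 0, a+b+1, -b, 0, -a;
        -a, 0, -b, a+b+2*c+1, -(c+1), -(c+1);
        -b, -a, 0, -(c+1), a+b+2*c+1, -(c+1);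
        0, -b, -a, -(c+1), -(c+1), a+b+2*c+1] : Matrix (Fin 6) (Fin 6) ℚ).det =
      -(3*a*b + 3*b*c + 3*c*a + 3*a + 3*b + 3*c + 2)^2 := by
  set A : Matrix (Fin 3) (Fin 3) ℚ := !![a+b+1,0,0; 0,a+b+1,0; 0,0,a+b+1] with hA
  set B : Matrix (Fin 3) (Fin 3) ℚ := !![-a,-b,0; 0,-a,-b; -b,0,-a] with hB
  set C : Matrix (Fin 3) (Fin 3) ℚ := !![-a,0,-b; -b,-a,0; 0,-b,-a] with hC
  set D : Matrix (Fin 3) (Fin 3) ℚ := !![a+b+2*c+1, -(c+1), -(c+1); -(c+1), a+b+2*c+1, -(c+1); -(c+1), -(c+1), a+b+2*c+1] with hD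
  set Ai : Matrix (Fin 3) (Fin 3) ℚ := !![(a+b+1)⁻¹,0,0; 0,(a+b+1)⁻¹,0; 0,0,(a+b+1)⁻¹] with hAi
  have h1 : A * Ai = 1 := by
    ext i j
    fin_cases i <;> fin_cases j <;>
      simp [hA, hAi, Matrix.mul_apply, Fin.sum_univ_succ, Matrix.one_apply] <;> field_simp
  letI hiA : Invertible A := ⟨Ai, by
    ext i j
    fin_cases i <;> fin_cases j <;>
      simp [hA, hAi, Matrix.mul_apply, Fin.sum_univ_succ, Matrix.one_apply] <;> field_simp, h1⟩
  have key : (!![a+b+1, 0, 0, -a, -b, 0;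
        0, a+b+1, 0, 0, -a, -b;
        0, 0, a+b+1, -b, 0, -a;
        -a, 0, -b, a+b+2*c+1, -(c+1), -(c+1);
        -b, -a, 0, -(c+1), a+b+2*c+1, -(c+1);
        0, -b, -a, -(c+1), -(c+1), a+b+2*c+1] : Matrix (Fin 6) (Fin 6) ℚ).submatrix
          e33 e33 = Matrix.fromBlocks A B C D := by
    ext i j
    rcases i with i | i <;> rcases j with j | j <;> fin_cases i <;> fin_cases j <;> rfl
  have hdet := Matrix.det_submatrix_equiv_self e33
    (!![a+b+1, 0, 0, -a, -b, 0;
        0, a+b+1, 0, 0, -a, -b;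
        0, 0, a+b+1, -b, 0, -a;
        -a, 0, -b, a+b+2*c+1, -(c+1), -(c+1);
        -b, -a, 0, -(c+1), a+b+2*c+1, -(c+1);
        0, -b, -a, -(c+1), -(c+1), a+b+2*c+1] : Matrix (Fin 6) (Fin 6) ℚ)
  rw [key] at hdet
  rw [← hdet, Matrix.det_fromBlocks₁₁]
  have hinv : (⅟A : Matrix (Fin 3) (Fin 3) ℚ) = Ai := invOf_eq_right_inv h1
  rw [hinv, Matrix.det_fin_three, Matrix.det_fin_three]
  simp [hA, hAi, hB, hC, hD, Matrix.mul_apply, Fin.sum_univ_succ, Matrix.sub_apply,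
    Matrix.cons_val_zero, Matrix.cons_val_one, Matrix.head_cons, Matrix.cons_val_two,
    Matrix.tail_cons, Matrix.head_fin_const, Matrix.vecHead, Matrix.vecTail]
  field_simp
  ring

set_option maxHeartbeats 3000000 in
theorem stmt19 (a b c : ℤ) (ha : 1 ≤ a) (hb : 1 ≤ b) (hc : 1 ≤ c) :
    (a : ℚ)^3 * (G1' a b c).det =
      ((3*(a:ℚ)*b + 3*(b:ℚ)*c + 3*(c:ℚ)*a + 3*(a:ℚ) + 3*(b:ℚ) + 3*(c:ℚ) + 2))^2 := by
  have ha1 : (1 : ℚ) ≤ (a : ℚ) := by exact_mod_cast ha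
  have hb1 : (1 : ℚ) ≤ (b : ℚ) := by exact_mod_cast hb
  have hc1 : (1 : ℚ) ≤ (c : ℚ) := by exact_mod_cast hc
  have ha0 : (a : ℚ) ≠ 0 := by linarith
  have hab : (a : ℚ) + (b : ℚ) + 1 ≠ 0 := by linarith
  set A : Matrix (Fin 3) (Fin 3) ℚ :=
    !![-(1/(a:ℚ)),((0:ℤ):ℚ),((0:ℤ):ℚ); ((0:ℤ):ℚ),-(1/(a:ℚ)),((0:ℤ):ℚ);
       ((0:ℤ):ℚ),((0:ℤ):ℚ),-(1/(a:ℚ))] with hA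
  set B : Matrix (Fin 3) (Fin 6) ℚ :=
    !![((-1:ℤ):ℚ),((0:ℤ):ℚ),((0:ℤ):ℚ),((1:ℤ):ℚ),((0:ℤ):ℚ),((0:ℤ):ℚ);
       ((0:ℤ):ℚ),((-1:ℤ):ℚ),((0:ℤ):ℚ),((0:ℤ):ℚ),((1:ℤ):ℚ),((0:ℤ):ℚ);
       ((0:ℤ):ℚ),((0:ℤ):ℚ),((-1:ℤ):ℚ),((0:ℤ):ℚ),((0:ℤ):ℚ),((1:ℤ):ℚ)] with hB
  set C : Matrix (Fin 6) (Fin 3) ℚ :=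
    !![((-1:ℤ):ℚ),((0:ℤ):ℚ),((0:ℤ):ℚ); ((0:ℤ):ℚ),((-1:ℤ):ℚ),((0:ℤ):ℚ);
       ((0:ℤ):ℚ),((0:ℤ):ℚ),((-1:ℤ):ℚ);
       ((1:ℤ):ℚ),((0:ℤ):ℚ),((0:ℤ):ℚ); ((0:ℤ):ℚ),((1:ℤ):ℚ),((0:ℤ):ℚ);
       ((0:ℤ):ℚ),((0:ℤ):ℚ),((1:ℤ):ℚ)] with hC
  set D : Matrix (Fin 6) (Fin 6) ℚ :=
    !![((b+1:ℤ):ℚ),((0:ℤ):ℚ),((0:ℤ):ℚ),((0:ℤ):ℚ),((-b:ℤ):ℚ),((0:ℤ):ℚ);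
       ((0:ℤ):ℚ),((b+1:ℤ):ℚ),((0:ℤ):ℚ),((0:ℤ):ℚ),((0:ℤ):ℚ),((-b:ℤ):ℚ);
       ((0:ℤ):ℚ),((0:ℤ):ℚ),((b+1:ℤ):ℚ),((-b:ℤ):ℚ),((0:ℤ):ℚ),((0:ℤ):ℚ);
       ((0:ℤ):ℚ),((0:ℤ):ℚ),((-b:ℤ):ℚ),((b+2*c+1:ℤ):ℚ),((-(c+1):ℤ):ℚ),((-(c+1):ℤ):ℚ);
       ((-b:ℤ):ℚ),((0:ℤ):ℚ),((0:ℤ):ℚ),((-(c+1):ℤ):ℚ),((b+2*c+1:ℤ):ℚ),((-(c+1):ℤ):ℚ);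
       ((0:ℤ):ℚ),((-b:ℤ):ℚ),((0:ℤ):ℚ),((-(c+1):ℤ):ℚ),((-(c+1):ℤ):ℚ),((b+2*c+1:ℤ):ℚ)] with hD
  set Ai : Matrix (Fin 3) (Fin 3) ℚ := !![-(a:ℚ),0,0; 0,-(a:ℚ),0; 0,0,-(a:ℚ)] with hAi
  have h1 : A * Ai = 1 := by
    ext i j
    fin_cases i <;> fin_cases j <;>
      simp [hA, hAi, Matrix.mul_apply, Fin.sum_univ_succ, Matrix.one_apply] <;> field_simp
  letI hiA : Invertible A := ⟨Ai, by
    ext i j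
    fin_cases i <;> fin_cases j <;>
      simp [hA, hAi, Matrix.mul_apply, Fin.sum_univ_succ, Matrix.one_apply] <;> field_simp, h1⟩
  have key : (G1' a b c).submatrix e36 e36 = Matrix.fromBlocks A B C D := by
    ext i j
    rcases i with i | i <;> rcases j with j | j <;> fin_cases i <;> fin_cases j <;> rfl
  have hdet := Matrix.det_submatrix_equiv_self e36 (G1' a b c)
  rw [key] at hdet
  rw [← hdet, Matrix.det_fromBlocks₁₁]
  have hinv : (⅟A : Matrix (Fin 3) (Fin 3) ℚ) = Ai := invOf_eq_right_inv h1
  rw [hinv]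
  have hSchur : D - C * Ai * B =
      !![(a:ℚ)+(b:ℚ)+1, 0, 0, -(a:ℚ), -(b:ℚ), 0;
        0, (a:ℚ)+(b:ℚ)+1, 0, 0, -(a:ℚ), -(b:ℚ);
        0, 0, (a:ℚ)+(b:ℚ)+1, -(b:ℚ), 0, -(a:ℚ);
        -(a:ℚ), 0, -(b:ℚ), (a:ℚ)+(b:ℚ)+2*(c:ℚ)+1, -((c:ℚ)+1), -((c:ℚ)+1);
        -(b:ℚ), -(a:ℚ), 0, -((c:ℚ)+1), (a:ℚ)+(b:ℚ)+2*(c:ℚ)+1, -((c:ℚ)+1);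
        0, -(b:ℚ), -(a:ℚ), -((c:ℚ)+1), -((c:ℚ)+1), (a:ℚ)+(b:ℚ)+2*(c:ℚ)+1] := by
    ext i j
    fin_cases i <;> fin_cases j <;>
      simp [hA, hAi, hB, hC, hD, Matrix.mul_apply, Fin.sum_univ_succ, Matrix.sub_apply,
        Matrix.cons_val_zero, Matrix.cons_val_one, Matrix.head_cons, Matrix.cons_val_two,
        Matrix.tail_cons, Matrix.cons_val_three, Matrix.cons_val_four, Matrix.vecHead,
        Matrix.vecTail] <;>
      push_cast <;> ring
  rw [hSchur, det6 (a:ℚ) (b:ℚ) (c:ℚ) hab]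
  rw [hA, Matrix.det_fin_three]
  simp only [Matrix.of_apply, Matrix.cons_val', Matrix.cons_val_zero, Matrix.cons_val_one, Matrix.head_cons,
    Matrix.empty_val', Matrix.cons_val_fin_one, Matrix.head_fin_const, Matrix.cons_val_two,
    Matrix.tail_cons, Int.cast_zero]
  field_simp
  ring
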